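/- Suppose (R^{(r)})_{r≥0} is a sequence of multilinear forms, R^{(r)} : (ℝ^{n+2})^{4+r} → ℝ written R_{IJKL,M₁⋯M_r}, which for every r ≥ 0 satisfies: (a) R_{IJKL,M₁⋯M_r} is antisymmetric in I,J, antisymmetric in K,L, and symmetric in M₁,…,M_r; (b) R_{I[JKL],M₁⋯M_r} = 0; (c) R_{IJ[KL,M₁]M₂⋯M_r} = 0; and (d) R_{IJK0,M₁⋯M_r} = −Σ_{s=1}^{r} R_{IJKM_s,M₁⋯M̂_s⋯M_r} (interpreted as R_{IJK0} = 0 when r = 0). Then for every r ≥ 0 one has R_{IJKL,M₁⋯M_r 0} = (−2 − r) R_{IJKL,M₁⋯M_r}; that is, inserting the vector e_0 into a differentiation slot acts as multiplication by −2 − r. -/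

import Mathlib

open Matrix

noncomputable section

abbrev Idx (p q : ℕ) : Type := Unit ⊕ (Fin (p + q)) ⊕ Unit

/-- The diagonal quadratic form of signature `(p,q)` on `ℝ^n`, `n = p + q`. -/
def hMat (p q : ℕ) : Matrix (Fin (p + q)) (Fin (p + q)) ℝ :=
  Matrix.diagonal fun i => if (i : ℕ) < p then (1 : ℝ) else -1

/-- The quadratic form of signature `(p+1,q+1)` on `ℝ^{n+2}`, in block form
`[[0,0,1],[0,h,0],[1,0,0]]`. -/
def htMat (p q : ℕ) : Matrix (Idx p q) (Idx p q) ℝ :=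
  Matrix.of fun I J =>
    match I, J with
    | Sum.inl _, Sum.inr (Sum.inr _) => (1 : ℝ)
    | Sum.inr (Sum.inr _), Sum.inl _ => 1
    | Sum.inr (Sum.inl i), Sum.inr (Sum.inl j) => hMat p q i j
    | _, _ => 0

/-- The distinguished index `0`, corresponding to insertion of the basis
vector `e₀`. -/
def i0 (p q : ℕ) : Idx p q := Sum.inl ()

lemma perm3_univ : (Finset.univ : Finset (Equiv.Perm (Fin 3))) =
    {1, Equiv.swap 0 1, Equiv.swap 0 2, Equiv.swap 1 2,
     Equiv.swap 0 1 * Equiv.swap 1 2, Equiv.swap 1 2 * Equiv.swap 0 1} := by decide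

lemma perm3_sum (f : Equiv.Perm (Fin 3) → ℝ) :
    ∑ σ : Equiv.Perm (Fin 3), f σ =
      f 1 + f (Equiv.swap 0 1) + f (Equiv.swap 0 2) + f (Equiv.swap 1 2)
      + f (Equiv.swap 0 1 * Equiv.swap 1 2) + f (Equiv.swap 1 2 * Equiv.swap 0 1) := by
  rw [perm3_univ]
  rw [Finset.sum_insert (by decide), Finset.sum_insert (by decide),
    Finset.sum_insert (by decide), Finset.sum_insert (by decide),
    Finset.sum_insert (by decide), Finset.sum_singleton]
  ring

/-- For a list of curvature-type tensors `R^{(r)}` (components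
`R_{IJKL,M₁⋯M_r}`) satisfying the curvature symmetries (a), the first Bianchi
identity (b), the second Bianchi identity (c), and relation (d)
`R_{IJK0,M₁⋯M_r} = -Σ_s R_{IJKM_s,M₁⋯M̂_s⋯M_r}`, inserting `e₀` into a
differentiation slot acts as multiplication by `-2 - r`:
`R_{IJKL,M₁⋯M_r0} = (-2-r) R_{IJKL,M₁⋯M_r}`. -/
theorem statement18 (p q : ℕ) (hn : 3 ≤ p + q)
    (R : (r : ℕ) → Idx p q → Idx p q → Idx p q → Idx p q →
      (Fin r → Idx p q) → ℝ)
    (hanti1 : ∀ r I J K L (M : Fin r → Idx p q),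
      R r I J K L M = -R r J I K L M)
    (hanti2 : ∀ r I J K L (M : Fin r → Idx p q),
      R r I J K L M = -R r I J L K M)
    (hsymmM : ∀ r I J K L (M : Fin r → Idx p q) (σ : Equiv.Perm (Fin r)),
      R r I J K L (M ∘ σ) = R r I J K L M)
    (hbianchi1 : ∀ r I J K L (M : Fin r → Idx p q),
      ∑ σ : Equiv.Perm (Fin 3),
        ((Equiv.Perm.sign σ : ℤ) : ℝ) *
          R r I (![J, K, L] (σ 0)) (![J, K, L] (σ 1)) (![J, K, L] (σ 2)) M = 0)
    (hbianchi2 : ∀ r I J K L (M : Fin (r + 1) → Idx p q),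
      ∑ σ : Equiv.Perm (Fin 3),
        ((Equiv.Perm.sign σ : ℤ) : ℝ) *
          R (r + 1) I J (![K, L, M 0] (σ 0)) (![K, L, M 0] (σ 1))
            (Function.update M 0 (![K, L, M 0] (σ 2))) = 0)
    (hd0 : ∀ I J K (M : Fin 0 → Idx p q), R 0 I J K (i0 p q) M = 0)
    (hd : ∀ r I J K (M : Fin (r + 1) → Idx p q),
      R (r + 1) I J K (i0 p q) M
        = -∑ s : Fin (r + 1), R r I J K (M s) (fun i => M (s.succAbove i))) :
    ∀ r I J K L (M : Fin r → Idx p q),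
      R (r + 1) I J K L (Fin.snoc M (i0 p q))
        = (-2 - (r : ℝ)) * R r I J K L M := by
    -- The key "cyclic" consequence of the second Bianchi identity:
  have star : ∀ r I J K L (P : Fin (r+1) → Idx p q),
      R (r+1) I J K L P
        = R (r+1) I J K (P 0) (Function.update P 0 L)
          - R (r+1) I J L (P 0) (Function.update P 0 K) := by
    intro r I J K L P
    have h := hbianchi2 r I J K L P
    rw [perm3_sum] at h
    have s1 : ((Equiv.Perm.sign (1 : Equiv.Perm (Fin 3)) : ℤ) : ℝ) = 1 := by simp
    have s2 : ((Equiv.Perm.sign (Equiv.swap (0:Fin 3) 1) : ℤ) : ℝ) = -1 := by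
      rw [Equiv.Perm.sign_swap (by decide)]; simp
    have s3 : ((Equiv.Perm.sign (Equiv.swap (0:Fin 3) 2) : ℤ) : ℝ) = -1 := by
      rw [Equiv.Perm.sign_swap (by decide)]; simp
    have s4 : ((Equiv.Perm.sign (Equiv.swap (1:Fin 3) 2) : ℤ) : ℝ) = -1 := by
      rw [Equiv.Perm.sign_swap (by decide)]; simp
    have s5 : ((Equiv.Perm.sign (Equiv.swap (0:Fin 3) 1 * Equiv.swap 1 2) : ℤ) : ℝ) = 1 := by
      rw [_root_.map_mul, Equiv.Perm.sign_swap (by decide), Equiv.Perm.sign_swap (by decide)]; simp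
    have s6 : ((Equiv.Perm.sign (Equiv.swap (1:Fin 3) 2 * Equiv.swap 0 1) : ℤ) : ℝ) = 1 := by
      rw [_root_.map_mul, Equiv.Perm.sign_swap (by decide), Equiv.Perm.sign_swap (by decide)]; simp
    rw [s1, s2, s3, s4, s5, s6] at h
    simp only [Equiv.Perm.one_apply, Equiv.Perm.mul_apply, Equiv.swap_apply_def] at h
    norm_num [Fin.ext_iff] at h
    rw [show (![K, L, P 0] : Fin 3 → Idx p q) 2 = P 0 from rfl, Function.update_eq_self] at h
    linarith [hanti2 (r+1) I J K L P,
      hanti2 (r+1) I J (P 0) L (Function.update P 0 K),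
      hanti2 (r+1) I J (P 0) K (Function.update P 0 L), h]
  intro r I J K L M
  -- Step 1: move the `0` index to the front.
  have hstep1 : R (r+1) I J K L (Fin.snoc M (i0 p q))
      = R (r+1) I J K L (Fin.cons (i0 p q) M) := by
    have h := hsymmM (r+1) I J K L (Fin.cons (i0 p q) M) (finRotate (r+1))
    rw [← h]
    congr 1
    funext j
    induction j using Fin.lastCases with
    | last =>
        simp [Fin.snoc_last, Function.comp, finRotate_succ_apply, Fin.last_add_one]
    | cast u =>
        simp [Fin.snoc_castSucc, Function.comp, finRotate_succ_apply,
          Fin.coeSucc_eq_succ]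
  -- Step 2: cyclic identity with P = cons i0 M.
  have h2 : R (r+1) I J K L (Fin.cons (i0 p q) M)
      = R (r+1) I J K (i0 p q) (Fin.cons L M)
        - R (r+1) I J L (i0 p q) (Fin.cons K M) := by
    have h := star r I J K L (Fin.cons (i0 p q) M)
    simpa only [Fin.cons_zero, Fin.update_cons_zero] using h
  -- Step 3: expand relation (d).
  have h3 : ∀ K' L', R (r+1) I J K' (i0 p q) (Fin.cons L' M)
      = -(R r I J K' L' M
          + ∑ t : Fin r, R r I J K' (M t)
              (fun i => (Fin.cons L' M : Fin (r+1) → Idx p q) (t.succ.succAbove i))) := by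
    intro K' L'
    rw [hd r I J K' (Fin.cons L' M), Fin.sum_univ_succ]
    simp only [Fin.cons_zero, Fin.cons_succ, Fin.zero_succAbove]
  -- Step 4: each summand equals -R via second Bianchi + symmetry.
  have h4 : ∀ t : Fin r,
      R r I J L (M t) (fun i => (Fin.cons K M : Fin (r+1) → Idx p q) (t.succ.succAbove i))
        - R r I J K (M t) (fun i => (Fin.cons L M : Fin (r+1) → Idx p q) (t.succ.succAbove i))
        = -R r I J K L M := by
    intro t
    have hr : 0 < r := t.pos
    obtain ⟨r', rfl⟩ : ∃ r', r = r' + 1 := ⟨r - 1, by omega⟩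
    have hs := star r' I J K L ((Fin.cons (M t) (M ∘ t.succAbove) : Fin (r'+1) → Idx p q))
    simp only [Fin.cons_zero, Fin.update_cons_zero] at hs
    have htail : ∀ X : Idx p q,
        (fun i => (Fin.cons X M : Fin (r'+1+1) → Idx p q) (t.succ.succAbove i))
        = (Fin.cons X (M ∘ t.succAbove) : Fin (r'+1) → Idx p q) := by
      intro X
      funext i
      induction i using Fin.cases with
      | zero => simp
      | succ u => simp [Fin.succ_succAbove_succ]
    have hpm : (Fin.cons (M t) (M ∘ t.succAbove) : Fin (r'+1) → Idx p q)
        = M ∘ (t.cycleRange).symm := by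
      funext i
      induction i using Fin.cases with
      | zero => simp [Fin.cycleRange_symm_zero]
      | succ u => simp [Fin.cycleRange_symm_succ]
    have hM : R (r'+1) I J K L ((Fin.cons (M t) (M ∘ t.succAbove) : Fin (r'+1) → Idx p q))
        = R (r'+1) I J K L M := by
      rw [hpm]; exact hsymmM (r'+1) I J K L M (t.cycleRange).symm
    rw [htail K, htail L]
    linarith [hs, hM]
  have hsum : (∑ t : Fin r, R r I J L (M t)
        (fun i => (Fin.cons K M : Fin (r+1) → Idx p q) (t.succ.succAbove i)))
      - (∑ t : Fin r, R r I J K (M t)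
        (fun i => (Fin.cons L M : Fin (r+1) → Idx p q) (t.succ.succAbove i)))
      = -(r : ℝ) * R r I J K L M := by
    rw [← Finset.sum_sub_distrib, Finset.sum_congr rfl fun t _ => h4 t,
      Finset.sum_const, Finset.card_univ, Fintype.card_fin, nsmul_eq_mul]
    ring
  rw [hstep1, h2, h3 K L, h3 L K]
  have haK := hanti2 r I J K L M
  linear_combination hsum + haK
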